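/- Let (Ω, F, (F_t), Q) be a filtered probability space carrying a Brownian motion B and an F₀-measurable random variable x₀ with values in S¹, and let ω be an independent random variable with law μ. Suppose b: S¹×S¹×ℝ → ℝ is bounded and Lipschitz in its first two variables uniformly in the third, and c: S¹×ℝ → ℝ is Lipschitz in its first variable uniformly in the second with ∫ sup_x|c(x,ω)| μ(dω) < ∞. Then there is pathwise existence and uniqueness for the nonlinear (McKean–Vlasov) SDE: x_t = x₀ + ∫₀ᵗ b[x_s, P_s] ds + ∫₀ᵗ c(x_s, ω) ds + B_t, where P_t is the joint law of (x_t, ω) and b[x,m] = ∫ b(x,y,π) m(dy,dπ). -/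

import Mathlib

open MeasureTheory Real Filter

noncomputable section

/-- `x` is a solution of the nonlinear (McKean–Vlasov) SDE
`x_t = x₀ + ∫₀ᵗ b[x_s, P_s] ds + ∫₀ᵗ c(x_s, ω) ds + B_t`, where
`P_s = Law(x_s, ω)` (the circle is represented by 2π-periodic coefficients on ℝ). -/
def IsNonlinearSol {Ω : Type*} [MeasurableSpace Ω] (Q : Measure Ω) (T : ℝ)
    (b : ℝ → ℝ → ℝ → ℝ) (c : ℝ → ℝ → ℝ) (B : ℝ → Ω → ℝ) (x₀ : Ω → ℝ) (dis : Ω → ℝ)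
    (x : ℝ → Ω → ℝ) : Prop :=
  (∀ t, Measurable (x t)) ∧ (∀ η, Continuous fun t => x t η) ∧
  ∀ᵐ η ∂Q, ∀ t ∈ Set.Icc (0:ℝ) T,
    x t η = x₀ η
      + (∫ s in (0:ℝ)..t,
          ∫ q : ℝ × ℝ, b (x s η) q.1 q.2 ∂(Q.map fun η' => (x s η', dis η')))
      + (∫ s in (0:ℝ)..t, c (x s η) (dis η)) + B t η

end

open Topology

set_option maxHeartbeats 4000000

namespace Stmt5Aux
variable {Ω : Type*} [MeasurableSpace Ω]

noncomputable def picF (Q : Measure Ω) (b : ℝ → ℝ → ℝ → ℝ) (c : ℝ → ℝ → ℝ) (dis : Ω → ℝ)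
    (u : Ω → ℝ) (η : Ω) : ℝ :=
  (∫ η', b (u η) (u η') (dis η') ∂Q) + c (u η) (dis η)

noncomputable def pic (Q : Measure Ω) (b : ℝ → ℝ → ℝ → ℝ) (c : ℝ → ℝ → ℝ) (B : ℝ → Ω → ℝ)
    (x₀ dis : Ω → ℝ) : ℕ → ℝ → Ω → ℝ
  | 0 => fun t η => x₀ η + B t η
  | (n+1) => fun t η =>
      x₀ η + (∫ s in (0:ℝ)..t, picF Q b c dis (pic Q b c B x₀ dis n s) η) + B t η

end Stmt5Aux


theorem integral_add_aux1 {Ω : Type*} [MeasurableSpace Ω] {Q : Measure Ω} [IsFiniteMeasure Q]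
    {f : Ω → ℝ} (hf : Integrable f Q) (r : ℝ) : Integrable (fun η => r + f η) Q := by
  simpa using (integrable_const r).add hf

theorem integral_add_aux2 {Ω : Type*} [MeasurableSpace Ω] {Q : Measure Ω} [IsFiniteMeasure Q]
    {f : Ω → ℝ} (hf : Integrable f Q) (r : ℝ) : Integrable (fun η => f η + r) Q := by
  simpa using hf.add (integrable_const r)

open Stmt5Aux

/-- pathwise existence and uniqueness for the nonlinear McKean–Vlasov SDE
driven by a continuous process `B` (e.g. a Brownian motion), with bounded Lipschitz
interaction `b` and Lipschitz disorder drift `c`. -/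
theorem stmt5 {Ω : Type*} [MeasurableSpace Ω] (Q : Measure Ω) [IsProbabilityMeasure Q]
    (T : ℝ) (hT : 0 < T) (μ : Measure ℝ) [IsProbabilityMeasure μ]
    (b : ℝ → ℝ → ℝ → ℝ) (c : ℝ → ℝ → ℝ) (K Cb : ℝ)
    (hbper1 : ∀ y w : ℝ, Function.Periodic (fun x => b x y w) (2 * π))
    (hbper2 : ∀ x w : ℝ, Function.Periodic (fun y => b x y w) (2 * π))
    (hbbd : ∀ x y w : ℝ, |b x y w| ≤ Cb)
    (hbLip : ∀ w x x' y y' : ℝ, |b x y w - b x' y' w| ≤ K * (|x - x'| + |y - y'|))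
    (hbmeas : Measurable fun q : ℝ × ℝ × ℝ => b q.1 q.2.1 q.2.2)
    (hcper : ∀ w : ℝ, Function.Periodic (fun x => c x w) (2 * π))
    (hcLip : ∀ w x x' : ℝ, |c x w - c x' w| ≤ K * |x - x'|)
    (hcmeas : Measurable (Function.uncurry c))
    (hcint : ∃ S : ℝ → ℝ, Integrable S μ ∧ ∀ x w : ℝ, |c x w| ≤ S w)
    (B : ℝ → Ω → ℝ) (hBcont : ∀ η, Continuous fun t => B t η)
    (hBmeas : ∀ t, Measurable (B t)) (hB0 : ∀ η, B 0 η = 0)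
    (x₀ : Ω → ℝ) (hx₀ : Measurable x₀)
    (dis : Ω → ℝ) (hdis : Measurable dis) (hdisLaw : Q.map dis = μ) :
    ∃ x : ℝ → Ω → ℝ, IsNonlinearSol Q T b c B x₀ dis x ∧
      ∀ y : ℝ → Ω → ℝ, IsNonlinearSol Q T b c B x₀ dis y →
        ∀ᵐ η ∂Q, ∀ t ∈ Set.Icc (0:ℝ) T, x t η = y t η := by
  classical
  obtain ⟨S, hSint0, hSbd⟩ := hcint
  -- basic positivity
  have hK0 : 0 ≤ K := by
    have h := hcLip 0 0 1
    have h2 := abs_nonneg (c 0 0 - c 1 0)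
    simp at h; linarith
  have hCb0 : 0 ≤ Cb := le_trans (abs_nonneg _) (hbbd 0 0 0)
  have hS0 : ∀ w, 0 ≤ S w := fun w => le_trans (abs_nonneg _) (hSbd 0 w)
  have hSdis_int : Integrable (fun η => S (dis η)) Q := by
    have h : Integrable S (Q.map dis) := by rw [hdisLaw]; exact hSint0
    exact (integrable_map_measure h.aestronglyMeasurable hdis.aemeasurable).mp h
  set ES := ∫ η, S (dis η) ∂Q with hESdef
  have hES0 : 0 ≤ ES := integral_nonneg fun η => hS0 _
  set C₀ := T * (Cb + ES) with hC₀def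
  have hC₀0 : 0 ≤ C₀ := mul_nonneg hT.le (by linarith)
  set D : Ω → ℝ := fun η => T * (Cb + S (dis η)) + C₀ with hDdef
  have hD0 : ∀ η, 0 ≤ D η := fun η => by
    have := hS0 (dis η); positivity
  have hDC₀ : ∀ η, C₀ ≤ D η := fun η => by
    have h1 := hS0 (dis η)
    simp only [hDdef]
    nlinarith [hT.le]
  have hDint : Integrable D Q :=
    (((integrable_const Cb).add hSdis_int).const_mul T).add (integrable_const C₀)
  have hint1 : Integrable (fun η => Cb + S (dis η)) Q :=
    integral_add_aux1 hSdis_int Cb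
  have e1 : ∫ η, (Cb + S (dis η)) ∂Q = Cb + ES := by
    rw [integral_add (integrable_const Cb) hSdis_int, integral_const]
    simp [hESdef]
  have hDval : ∫ η, D η ∂Q = 2 * C₀ := by
    have e2 : ∫ η, D η ∂Q = (∫ η, T * (Cb + S (dis η)) ∂Q) + ∫ _η : Ω, C₀ ∂Q :=
      integral_add (hint1.const_mul T) (integrable_const _)
    rw [e2, integral_const_mul, e1, integral_const]
    simp [hC₀def]
    ring
  -- continuity of Lipschitz slices
  have hby_cont : ∀ z w : ℝ, Continuous fun y => b z y w := by
    intro z w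
    refine (LipschitzWith.of_dist_le_mul (K := K.toNNReal) fun y y' => ?_).continuous
    rw [Real.dist_eq, Real.dist_eq, Real.coe_toNNReal K hK0]
    simpa using hbLip w z z y y'
  have hcx_cont : ∀ w : ℝ, Continuous fun x => c x w := by
    intro w
    refine (LipschitzWith.of_dist_le_mul (K := K.toNNReal) fun y y' => ?_).continuous
    rw [Real.dist_eq, Real.dist_eq, Real.coe_toNNReal K hK0]
    exact hcLip w y y'
  -- measurability and integrability of the b-integrand
  have mb1 : ∀ (z : ℝ) (u : Ω → ℝ), Measurable u → Measurable (fun η' => b z (u η') (dis η')) :=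
    fun z u hu => hbmeas.comp (measurable_const.prodMk (hu.prodMk hdis))
  have hbint : ∀ (z : ℝ) (u : Ω → ℝ), Measurable u →
      Integrable (fun η' => b z (u η') (dis η')) Q := by
    intro z u hu
    refine (integrable_const Cb).mono' (mb1 z u hu).aestronglyMeasurable ?_
    exact ae_of_all _ fun η' => by simpa [Real.norm_eq_abs] using hbbd z (u η') (dis η')
  -- joint continuity of the mean field term
  have hGcont : ∀ (u : ℝ → Ω → ℝ), (∀ t, Measurable (u t)) → (∀ η, Continuous fun t => u t η) →
      Continuous fun p : ℝ × ℝ => ∫ η', b p.2 (u p.1 η') (dis η') ∂Q := by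
    intro u hum huc
    have lip : ∀ s : ℝ, LipschitzWith K.toNNReal fun z => ∫ η', b z (u s η') (dis η') ∂Q := by
      intro s
      refine LipschitzWith.of_dist_le_mul fun z z' => ?_
      rw [Real.dist_eq, Real.dist_eq, Real.coe_toNNReal K hK0,
        ← integral_sub (hbint z _ (hum s)) (hbint z' _ (hum s))]
      have h1 : ‖∫ η', (b z (u s η') (dis η') - b z' (u s η') (dis η')) ∂Q‖
          ≤ ∫ _η' : Ω, K * |z - z'| ∂Q := by
        refine norm_integral_le_of_norm_le (integrable_const _) (ae_of_all _ fun η' => ?_)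
        rw [Real.norm_eq_abs]
        simpa using hbLip (dis η') z z' (u s η') (u s η')
      rw [Real.norm_eq_abs] at h1
      simpa using h1
    have conts : ∀ z : ℝ, Continuous fun s => ∫ η', b z (u s η') (dis η') ∂Q := by
      intro z
      rw [continuous_iff_continuousAt]
      intro s₀
      refine tendsto_integral_filter_of_dominated_convergence (fun _ => Cb)
        (Eventually.of_forall fun s => (mb1 z _ (hum s)).aestronglyMeasurable)
        (Eventually.of_forall fun s => ae_of_all _ fun η' => ?_) (integrable_const _)
        (ae_of_all _ fun η' => ?_)
      · rw [Real.norm_eq_abs]; exact hbbd z (u s η') (dis η')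
      · exact ((hby_cont z (dis η')).tendsto _).comp ((huc η').tendsto s₀)
    have hj : Continuous fun q : ℝ × ℝ => ∫ η', b q.1 (u q.2 η') (dis η') ∂Q :=
      continuous_prod_of_continuous_lipschitzWith _ K.toNNReal (fun z => conts z) (fun s => lip s)
    exact hj.comp (continuous_snd.prodMk continuous_fst)
  -- picF lemmas
  have picF_def : ∀ (u : Ω → ℝ) η, picF Q b c dis u η
      = (∫ η', b (u η) (u η') (dis η') ∂Q) + c (u η) (dis η) := fun _ _ => rfl
  have hFcont : ∀ (u : ℝ → Ω → ℝ), (∀ t, Measurable (u t)) → (∀ η, Continuous fun t => u t η) →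
      ∀ η, Continuous fun s => picF Q b c dis (u s) η := by
    intro u hum huc η
    simp only [picF_def]
    refine Continuous.add ?_ ?_
    · exact (hGcont u hum huc).comp (continuous_id.prodMk (huc η))
    · exact (hcx_cont (dis η)).comp (huc η)
  have hFmeas_joint : ∀ (u : ℝ → Ω → ℝ), (∀ t, Measurable (u t)) →
      (∀ η, Continuous fun t => u t η) →
      Measurable fun p : ℝ × Ω => picF Q b c dis (u p.1) p.2 := by
    intro u hum huc
    have huu : Measurable (Function.uncurry u) :=
      measurable_uncurry_of_continuous_of_measurable huc hum
    simp only [picF_def]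
    refine Measurable.add ?_ ?_
    · exact (hGcont u hum huc).measurable.comp (measurable_fst.prodMk huu)
    · exact hcmeas.comp (huu.prodMk (hdis.comp measurable_snd))
  have hFbd : ∀ (u : Ω → ℝ) η, |picF Q b c dis u η| ≤ Cb + S (dis η) := by
    intro u η
    rw [picF_def]
    refine (abs_add_le _ _).trans (add_le_add ?_ (hSbd _ _))
    have h1 : ‖∫ η', b (u η) (u η') (dis η') ∂Q‖ ≤ ∫ _η' : Ω, Cb ∂Q := by
      refine norm_integral_le_of_norm_le (integrable_const _) (ae_of_all _ fun η' => ?_)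
      rw [Real.norm_eq_abs]; exact hbbd _ _ _
    rw [Real.norm_eq_abs] at h1
    simpa using h1
  have hFmeas : ∀ (u : ℝ → Ω → ℝ), (∀ t, Measurable (u t)) →
      (∀ η, Continuous fun t => u t η) → ∀ t : ℝ,
      Measurable fun η => ∫ s in (0:ℝ)..t, picF Q b c dis (u s) η := by
    intro u hum huc t
    have hrw : (fun η => ∫ s in (0:ℝ)..t, picF Q b c dis (u s) η)
        = fun η => (if (0:ℝ) ≤ t then (1:ℝ) else -1)
            * ∫ s in Set.uIoc 0 t, picF Q b c dis (u s) η := by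
      funext η
      rw [intervalIntegral.intervalIntegral_eq_integral_uIoc, smul_eq_mul]
    rw [hrw]
    refine Measurable.const_mul ?_ _
    have hsm : StronglyMeasurable
        (Function.uncurry fun (η : Ω) (s : ℝ) => picF Q b c dis (u s) η) := by
      have : (Function.uncurry fun (η : Ω) (s : ℝ) => picF Q b c dis (u s) η)
          = (fun p : ℝ × Ω => picF Q b c dis (u p.1) p.2) ∘ Prod.swap := rfl
      rw [this]
      exact ((hFmeas_joint u hum huc).comp measurable_swap).stronglyMeasurable
    exact (hsm.integral_prod_right (ν := volume.restrict (Set.uIoc 0 t))).measurable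
  -- the Picard iterates
  set P : ℕ → ℝ → Ω → ℝ := pic Q b c B x₀ dis with hPdef
  have P0 : ∀ t η, P 0 t η = x₀ η + B t η := fun _ _ => rfl
  have Prec : ∀ n t η, P (n+1) t η
      = x₀ η + (∫ s in (0:ℝ)..t, picF Q b c dis (P n s) η) + B t η := fun _ _ _ => rfl
  have picP : ∀ n, (∀ t, Measurable (P n t)) ∧ (∀ η, Continuous fun t => P n t η) := by
    intro n
    induction n with
    | zero =>
      exact ⟨fun t => hx₀.add (hBmeas t), fun η => continuous_const.add (hBcont η)⟩
    | succ n ih =>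
      obtain ⟨ihm, ihc⟩ := ih
      constructor
      · intro t
        have : P (n+1) t = fun η =>
            x₀ η + (∫ s in (0:ℝ)..t, picF Q b c dis (P n s) η) + B t η := funext fun η => Prec n t η
        rw [this]
        exact (hx₀.add (hFmeas _ ihm ihc t)).add (hBmeas t)
      · intro η
        have : (fun t => P (n+1) t η) = fun t =>
            x₀ η + (∫ s in (0:ℝ)..t, picF Q b c dis (P n s) η) + B t η := funext fun t => Prec n t η
        rw [this]
        exact (continuous_const.add (intervalIntegral.continuous_primitive
          (fun a b' => ((hFcont _ ihm ihc η)).intervalIntegrable a b') 0)).add (hBcont η)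
  -- difference bound for picF
  have picF_diff_bound : ∀ (u v : Ω → ℝ), Measurable u → Measurable v →
      Integrable (fun η' => |u η' - v η'|) Q → ∀ η,
      |picF Q b c dis u η - picF Q b c dis v η|
        ≤ 2*K*|u η - v η| + K * ∫ η', |u η' - v η'| ∂Q := by
    intro u v hu hv hintuv η
    rw [picF_def, picF_def]
    have h1 : |(∫ η', b (u η) (u η') (dis η') ∂Q) - ∫ η', b (v η) (v η') (dis η') ∂Q|
        ≤ K*|u η - v η| + K * ∫ η', |u η' - v η'| ∂Q := by
      rw [← integral_sub (hbint _ _ hu) (hbint _ _ hv)]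
      have h2 : ‖∫ η', (b (u η) (u η') (dis η') - b (v η) (v η') (dis η')) ∂Q‖
          ≤ ∫ η', (K*|u η - v η| + K*|u η' - v η'|) ∂Q := by
        refine norm_integral_le_of_norm_le ((integrable_const _).add (hintuv.const_mul K))
          (ae_of_all _ fun η' => ?_)
        rw [Real.norm_eq_abs]
        simpa [mul_add] using hbLip (dis η') (u η) (v η) (u η') (v η')
      rw [Real.norm_eq_abs] at h2
      rw [integral_add (integrable_const _) (hintuv.const_mul K), integral_const,
        integral_const_mul] at h2
      simpa using h2
    have h2 : |c (u η) (dis η) - c (v η) (dis η)| ≤ K * |u η - v η| := hcLip _ _ _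
    calc |((∫ η', b (u η) (u η') (dis η') ∂Q) + c (u η) (dis η))
          - ((∫ η', b (v η) (v η') (dis η') ∂Q) + c (v η) (dis η))|
        ≤ |(∫ η', b (u η) (u η') (dis η') ∂Q) - ∫ η', b (v η) (v η') (dis η') ∂Q|
          + |c (u η) (dis η) - c (v η) (dis η)| := by
          rw [add_sub_add_comm]; exact abs_add_le _ _
      _ ≤ (K*|u η - v η| + K * ∫ η', |u η' - v η'| ∂Q) + K * |u η - v η| := add_le_add h1 h2
      _ = 2*K*|u η - v η| + K * ∫ η', |u η' - v η'| ∂Q := by ring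
  -- integrated estimate
  have integ_est : ∀ (f : Ω → ℝ) (r : ℝ), Measurable f → (∀ η, |f η| ≤ D η * r) →
      ∫ η, |f η| ∂Q ≤ 2*C₀*r := by
    intro f r hf hbd
    have hint : Integrable (fun η => |f η|) Q := by
      refine (hDint.mul_const r).mono' hf.abs.aestronglyMeasurable (ae_of_all _ fun η => ?_)
      rw [Real.norm_eq_abs, abs_abs]; exact hbd η
    calc ∫ η, |f η| ∂Q ≤ ∫ η, D η * r ∂Q := integral_mono hint (hDint.mul_const r) fun η => hbd η
      _ = (∫ η, D η ∂Q) * r := integral_mul_const _ _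
      _ = 2*C₀*r := by rw [hDval]
  -- algebra helpers
  have h4K : (0:ℝ) ≤ 4*K := by linarith
  have calc_step : ∀ (A : ℝ) (n : ℕ) (t : ℝ),
      (∫ s in (0:ℝ)..t, A * ((4*K)^n * s^n / n.factorial))
        = A * ((4*K)^n * t^(n+1) / ((n+1) * n.factorial)) := by
    intro A n t
    have hre : (fun s : ℝ => A * ((4*K)^n * s^n / n.factorial))
        = fun s : ℝ => (A * (4*K)^n / n.factorial) * s^n := funext fun s => by ring
    rw [hre, intervalIntegral.integral_const_mul, integral_pow]
    have hfac : ((n.factorial : ℝ)) ≠ 0 := Nat.cast_ne_zero.2 n.factorial_ne_zero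
    have hn1 : ((n:ℝ) + 1) ≠ 0 := by positivity
    field_simp
    ring
  have step_le : ∀ (A Wv : ℝ) (n : ℕ) (t : ℝ), 0 ≤ t → A ≤ 4*K*Wv →
      A * ((4*K)^n * t^(n+1) / ((n+1) * n.factorial))
        ≤ Wv * ((4*K)^(n+1) * t^(n+1) / (n+1).factorial) := by
    intro A Wv n t ht hA
    have hre : Wv * ((4*K)^(n+1) * t^(n+1) / (n+1).factorial)
        = (4*K*Wv) * ((4*K)^n * t^(n+1) / ((n+1) * n.factorial)) := by
      rw [pow_succ, Nat.factorial_succ]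
      push_cast
      ring
    rw [hre]
    refine mul_le_mul_of_nonneg_right hA ?_
    have h1 : (0:ℝ) ≤ (4*K)^n := pow_nonneg h4K n
    have h2 : (0:ℝ) ≤ t^(n+1) := pow_nonneg ht _
    positivity
  -- key estimate
  have key : ∀ n, ∀ t ∈ Set.Icc (0:ℝ) T, ∀ η,
      |P (n+1) t η - P n t η| ≤ D η * ((4*K)^n * t^n / n.factorial) := by
    intro n
    induction n with
    | zero =>
      intro t ht η
      have hd : P 1 t η - P 0 t η = ∫ s in (0:ℝ)..t, picF Q b c dis (P 0 s) η := by
        rw [Prec 0 t η, P0 t η]; ring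
      rw [hd]
      have h1 : ‖∫ s in (0:ℝ)..t, picF Q b c dis (P 0 s) η‖ ≤ (Cb + S (dis η)) * |t - 0| :=
        intervalIntegral.norm_integral_le_of_norm_le_const fun s _ => by
          rw [Real.norm_eq_abs]; exact hFbd (P 0 s) η
      rw [Real.norm_eq_abs] at h1
      have ht0 : (0:ℝ) ≤ t := ht.1
      have h2 : (Cb + S (dis η)) * |t - 0| ≤ D η * ((4*K)^0 * t^0 / Nat.factorial 0) := by
        simp only [pow_zero, Nat.factorial_zero, Nat.cast_one, mul_one, one_mul, sub_zero,
          abs_of_nonneg ht0]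
        rw [div_one]
        have := hS0 (dis η)
        simp only [hDdef]
        nlinarith [ht.2, hC₀0]
      exact h1.trans h2
    | succ n ih =>
      intro t ht η
      have ht0 : (0:ℝ) ≤ t := ht.1
      have hc1 : Continuous fun s => picF Q b c dis (P (n+1) s) η :=
        hFcont _ (picP (n+1)).1 (picP (n+1)).2 η
      have hc0 : Continuous fun s => picF Q b c dis (P n s) η :=
        hFcont _ (picP n).1 (picP n).2 η
      have hd : P (n+2) t η - P (n+1) t η
          = ∫ s in (0:ℝ)..t, (picF Q b c dis (P (n+1) s) η - picF Q b c dis (P n s) η) := by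
        rw [intervalIntegral.integral_sub (hc1.intervalIntegrable 0 t) (hc0.intervalIntegrable 0 t),
          Prec (n+1) t η, Prec n t η]
        ring
      rw [hd]
      have hbnd : ∀ s ∈ Set.Icc (0:ℝ) t,
          |picF Q b c dis (P (n+1) s) η - picF Q b c dis (P n s) η|
            ≤ (2*K*D η + 2*K*C₀) * ((4*K)^n * s^n / n.factorial) := by
        intro s hs
        have hsT : s ∈ Set.Icc (0:ℝ) T := ⟨hs.1, hs.2.trans ht.2⟩
        have hmeasd : Measurable fun η' => P (n+1) s η' - P n s η' :=
          ((picP (n+1)).1 s).sub ((picP n).1 s)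
        have hintd : Integrable (fun η' => |P (n+1) s η' - P n s η'|) Q := by
          refine (hDint.mul_const ((4*K)^n * s^n / n.factorial)).mono'
            hmeasd.abs.aestronglyMeasurable (ae_of_all _ fun η' => ?_)
          rw [Real.norm_eq_abs, abs_abs]
          exact ih s hsT η'
        have h1 := picF_diff_bound (P (n+1) s) (P n s) ((picP (n+1)).1 s) ((picP n).1 s) hintd η
        have h2 : ∫ η', |P (n+1) s η' - P n s η'| ∂Q ≤ 2*C₀*((4*K)^n * s^n / n.factorial) :=
          integ_est _ _ hmeasd fun η' => ih s hsT η'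
        have h3 := ih s hsT η
        have hKnn : 0 ≤ 2*K := by linarith
        calc |picF Q b c dis (P (n+1) s) η - picF Q b c dis (P n s) η|
            ≤ 2*K*|P (n+1) s η - P n s η| + K * ∫ η', |P (n+1) s η' - P n s η'| ∂Q := h1
          _ ≤ 2*K*(D η * ((4*K)^n * s^n / n.factorial)) + K * (2*C₀*((4*K)^n * s^n / n.factorial)) := by
              refine add_le_add (mul_le_mul_of_nonneg_left h3 hKnn) (mul_le_mul_of_nonneg_left h2 hK0)
          _ = (2*K*D η + 2*K*C₀) * ((4*K)^n * s^n / n.factorial) := by ring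
      have hcont_bd : Continuous fun s : ℝ => (2*K*D η + 2*K*C₀) * ((4*K)^n * s^n / n.factorial) := by
        have hre : (fun s : ℝ => (2*K*D η + 2*K*C₀) * ((4*K)^n * s^n / n.factorial))
            = fun s : ℝ => ((2*K*D η + 2*K*C₀) * (4*K)^n / n.factorial) * s^n :=
          funext fun s => by ring
        rw [hre]
        exact continuous_const.mul (continuous_pow n)
      have h4 : ‖∫ s in (0:ℝ)..t, (picF Q b c dis (P (n+1) s) η - picF Q b c dis (P n s) η)‖
          ≤ ∫ s in (0:ℝ)..t, |picF Q b c dis (P (n+1) s) η - picF Q b c dis (P n s) η| := by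
        have := intervalIntegral.norm_integral_le_integral_norm
          (f := fun s => picF Q b c dis (P (n+1) s) η - picF Q b c dis (P n s) η) (μ := volume) ht0
        simpa [Real.norm_eq_abs] using this
      rw [Real.norm_eq_abs] at h4
      refine h4.trans ?_
      have h5 : (∫ s in (0:ℝ)..t, |picF Q b c dis (P (n+1) s) η - picF Q b c dis (P n s) η|)
          ≤ ∫ s in (0:ℝ)..t, (2*K*D η + 2*K*C₀) * ((4*K)^n * s^n / n.factorial) :=
        intervalIntegral.integral_mono_on ht0 ((hc1.sub hc0).abs.intervalIntegrable 0 t)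
          (hcont_bd.intervalIntegrable 0 t) hbnd
      refine h5.trans ?_
      rw [calc_step]
      refine step_le _ _ _ _ ht0 ?_
      have := hDC₀ η
      nlinarith [hD0 η]
  -- summable bounds and limit
  set a : ℕ → ℝ := fun n => (4*K*T)^n / n.factorial with hadef
  have ha_sum : Summable a := Real.summable_pow_div_factorial _
  have ha0 : ∀ n, 0 ≤ a n := fun n =>
    div_nonneg (pow_nonneg (mul_nonneg h4K hT.le) _) (Nat.cast_nonneg _)
  set proj : ℝ → ℝ := fun t => max 0 (min t T) with hprojdef
  have hproj_mem : ∀ t, proj t ∈ Set.Icc (0:ℝ) T := fun t =>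
    ⟨le_max_left _ _, max_le hT.le (min_le_right _ _)⟩
  have hproj_eq : ∀ t ∈ Set.Icc (0:ℝ) T, proj t = t := fun t ht => by
    simp only [hprojdef]
    rw [min_eq_left ht.2, max_eq_right ht.1]
  have hproj_cont : Continuous proj := continuous_const.max (continuous_id.min continuous_const)
  have hd_consec : ∀ (n : ℕ) (t : ℝ) (η : Ω),
      dist (P n (proj t) η) (P (n+1) (proj t) η) ≤ D η * a n := by
    intro n t η
    rw [Real.dist_eq, abs_sub_comm]
    refine (key n (proj t) (hproj_mem t) η).trans ?_
    have h1 : (4*K)^n * (proj t)^n ≤ (4*K*T)^n := by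
      rw [← mul_pow]
      refine pow_le_pow_left₀ (mul_nonneg h4K (hproj_mem t).1) ?_ n
      exact mul_le_mul_of_nonneg_left (hproj_mem t).2 h4K
    have h2 : (4*K)^n * (proj t)^n / n.factorial ≤ a n := by
      rw [hadef]
      exact div_le_div_of_nonneg_right h1 (by positivity) |>.trans_eq rfl
    exact mul_le_mul_of_nonneg_left h2 (hD0 η)
  have hDa_sum : ∀ η, Summable fun n => D η * a n := fun η => ha_sum.mul_left _
  have hcauchy : ∀ t η, CauchySeq fun n => P n (proj t) η := fun t η =>
    cauchySeq_of_dist_le_of_summable _ (fun n => hd_consec n t η) (hDa_sum η)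
  set x : ℝ → Ω → ℝ := fun t η => limUnder atTop fun n => P n (proj t) η with hxdef
  have hxlim : ∀ t η, Tendsto (fun n => P n (proj t) η) atTop (𝓝 (x t η)) := fun t η =>
    (hcauchy t η).tendsto_limUnder
  set tail : ℕ → ℝ := fun n => ∑' m, a (n + m) with htaildef
  have htail : ∀ (n : ℕ) (t : ℝ) (η : Ω), dist (P n (proj t) η) (x t η) ≤ D η * tail n := by
    intro n t η
    have h := dist_le_tsum_of_dist_le_of_tendsto (fun k => D η * a k)
      (fun k => hd_consec k t η) (hDa_sum η) (hxlim t η) n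
    calc dist (P n (proj t) η) (x t η) ≤ ∑' m, D η * a (n + m) := h
      _ = D η * tail n := by rw [htaildef, tsum_mul_left]
  have htail0 : Tendsto tail atTop (𝓝 0) := by
    have h := tendsto_sum_nat_add a
    refine h.congr fun n => ?_
    simp only [htaildef]
    congr 1
    funext m
    rw [add_comm]
  have htail_nn : ∀ n, 0 ≤ tail n := fun n => tsum_nonneg fun m => ha0 _
  have hx_meas : ∀ t, Measurable (x t) := fun t =>
    measurable_of_tendsto_metrizable (fun n => (picP n).1 (proj t))
      (tendsto_pi_nhds.2 fun η => hxlim t η)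
  have hx_cont : ∀ η, Continuous fun t => x t η := by
    intro η
    refine TendstoUniformly.continuous (F := fun n t => P n (proj t) η) (p := atTop)
      ?_ (Eventually.of_forall fun n => ((picP n).2 η).comp hproj_cont).frequently
    rw [Metric.tendstoUniformly_iff]
    intro ε hε
    have h1 : Tendsto (fun n => D η * tail n) atTop (𝓝 0) := by
      have := htail0.const_mul (D η)
      simpa using this
    have h2 : ∀ᶠ n in atTop, D η * tail n < ε := h1.eventually (eventually_lt_nhds hε)
    filter_upwards [h2] with n hn t
    exact lt_of_le_of_lt (by rw [dist_comm]; exact htail n t η) hn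
  have hx_eqP : ∀ t ∈ Set.Icc (0:ℝ) T, ∀ η,
      Tendsto (fun n => P n t η) atTop (𝓝 (x t η)) := by
    intro s hs η
    have := hxlim s η
    rwa [hproj_eq s hs] at this
  have hx_tail : ∀ t ∈ Set.Icc (0:ℝ) T, ∀ (n : ℕ) (η : Ω),
      |P n t η - x t η| ≤ D η * tail n := by
    intro s hs n η
    have := htail n s η
    rwa [hproj_eq s hs, Real.dist_eq] at this
  have hEx_tail : ∀ t ∈ Set.Icc (0:ℝ) T, ∀ n : ℕ,
      ∫ η', |P n t η' - x t η'| ∂Q ≤ 2*C₀ * tail n := fun s hs n =>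
    integ_est _ _ (((picP n).1 s).sub (hx_meas s)) (fun η' => hx_tail s hs n η')
  -- the limit satisfies the fixed point equation (picF form)
  have heq : ∀ η, ∀ t ∈ Set.Icc (0:ℝ) T,
      x t η = x₀ η + (∫ s in (0:ℝ)..t, picF Q b c dis (x s) η) + B t η := by
    intro η t ht
    have hcx : Continuous fun s => picF Q b c dis (x s) η := hFcont x hx_meas hx_cont η
    have h1 : Tendsto (fun n => P (n+1) t η) atTop (𝓝 (x t η)) :=
      (hx_eqP t ht η).comp (tendsto_add_atTop_nat 1)
    have hdiffn : ∀ n : ℕ,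
        |(∫ s in (0:ℝ)..t, picF Q b c dis (P n s) η)
          - ∫ s in (0:ℝ)..t, picF Q b c dis (x s) η|
        ≤ ((2*K*D η + 2*K*C₀) * tail n) * |t - 0| := by
      intro n
      have hcPn : Continuous fun s => picF Q b c dis (P n s) η :=
        hFcont _ (picP n).1 (picP n).2 η
      rw [← intervalIntegral.integral_sub (hcPn.intervalIntegrable 0 t)
        (hcx.intervalIntegrable 0 t)]
      rw [← Real.norm_eq_abs]
      refine intervalIntegral.norm_integral_le_of_norm_le_const fun s hs => ?_
      rw [Set.uIoc_of_le ht.1] at hs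
      have hsT : s ∈ Set.Icc (0:ℝ) T := ⟨hs.1.le, hs.2.trans ht.2⟩
      have hintd : Integrable (fun η' => |P n s η' - x s η'|) Q := by
        refine (hDint.mul_const (tail n)).mono'
          ((((picP n).1 s).sub (hx_meas s)).abs.aestronglyMeasurable)
          (ae_of_all _ fun η' => ?_)
        rw [Real.norm_eq_abs, abs_abs]
        exact hx_tail s hsT n η'
      have hb1 := picF_diff_bound (P n s) (x s) ((picP n).1 s) (hx_meas s) hintd η
      have hb2 := hx_tail s hsT n η
      have hb3 := hEx_tail s hsT n
      rw [Real.norm_eq_abs]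
      calc |picF Q b c dis (P n s) η - picF Q b c dis (x s) η|
          ≤ 2*K*|P n s η - x s η| + K * ∫ η', |P n s η' - x s η'| ∂Q := hb1
        _ ≤ 2*K*(D η * tail n) + K * (2*C₀ * tail n) := by
            refine add_le_add (mul_le_mul_of_nonneg_left hb2 (by linarith))
              (mul_le_mul_of_nonneg_left hb3 hK0)
        _ = (2*K*D η + 2*K*C₀) * tail n := by ring
    have hTend : Tendsto (fun n => ∫ s in (0:ℝ)..t, picF Q b c dis (P n s) η) atTop
        (𝓝 (∫ s in (0:ℝ)..t, picF Q b c dis (x s) η)) := by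
      rw [tendsto_iff_dist_tendsto_zero]
      refine squeeze_zero (g := fun n => ((2*K*D η + 2*K*C₀) * tail n) * |t - 0|)
        (fun n => dist_nonneg) (fun n => ?_) ?_
      · rw [Real.dist_eq]
        exact hdiffn n
      · have := (htail0.const_mul (2*K*D η + 2*K*C₀)).mul_const (|t - 0|)
        simpa using this
    have h2 : Tendsto (fun n => P (n+1) t η) atTop
        (𝓝 (x₀ η + (∫ s in (0:ℝ)..t, picF Q b c dis (x s) η) + B t η)) := by
      have hre : (fun n => P (n+1) t η)
          = fun n => x₀ η + (∫ s in (0:ℝ)..t, picF Q b c dis (P n s) η) + B t η :=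
        funext fun n => Prec n t η
      rw [hre]
      exact (tendsto_const_nhds.add hTend).add tendsto_const_nhds
    exact tendsto_nhds_unique h1 h2
  -- rewriting the mean-field term through the image measure
  have hmap : ∀ (u : Ω → ℝ), Measurable u → ∀ z : ℝ,
      (∫ q : ℝ × ℝ, b z q.1 q.2 ∂(Q.map fun η' => (u η', dis η')))
        = ∫ η', b z (u η') (dis η') ∂Q := by
    intro u hu z
    rw [integral_map (hu.prodMk hdis).aemeasurable]
    exact (hbmeas.comp (measurable_const.prodMk measurable_id)).aestronglyMeasurable
  have hsplit : ∀ (u : ℝ → Ω → ℝ), (∀ t, Measurable (u t)) →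
      (∀ η, Continuous fun t => u t η) → ∀ η, ∀ t : ℝ,
      (∫ s in (0:ℝ)..t, picF Q b c dis (u s) η)
        = (∫ s in (0:ℝ)..t,
            ∫ q : ℝ × ℝ, b (u s η) q.1 q.2 ∂(Q.map fun η' => (u s η', dis η')))
          + ∫ s in (0:ℝ)..t, c (u s η) (dis η) := by
    intro u hum huc η t
    have hg : Continuous fun s => ∫ η', b (u s η) (u s η') (dis η') ∂Q :=
      (hGcont u hum huc).comp (continuous_id.prodMk (huc η))
    have hc : Continuous fun s => c (u s η) (dis η) := (hcx_cont (dis η)).comp (huc η)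
    have h1 : (∫ s in (0:ℝ)..t, picF Q b c dis (u s) η)
        = (∫ s in (0:ℝ)..t, ∫ η', b (u s η) (u s η') (dis η') ∂Q)
          + ∫ s in (0:ℝ)..t, c (u s η) (dis η) := by
      rw [← intervalIntegral.integral_add (hg.intervalIntegrable 0 t) (hc.intervalIntegrable 0 t)]
      rfl
    rw [h1]
    congr 1
    refine intervalIntegral.integral_congr fun s _ => ?_
    exact (hmap (u s) (hum s) (u s η)).symm
  -- uniqueness
  have uniq : ∀ y : ℝ → Ω → ℝ, (∀ t, Measurable (y t)) → (∀ η, Continuous fun t => y t η) →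
      (∀ᵐ η ∂Q, ∀ t ∈ Set.Icc (0:ℝ) T, y t η = x₀ η
        + (∫ s in (0:ℝ)..t,
            ∫ q : ℝ × ℝ, b (y s η) q.1 q.2 ∂(Q.map fun η' => (y s η', dis η')))
        + (∫ s in (0:ℝ)..t, c (y s η) (dis η)) + B t η) →
      ∀ᵐ η ∂Q, ∀ t ∈ Set.Icc (0:ℝ) T, x t η = y t η := by
    intro y hym hyc hyae
    -- picF form of the equation for y
    have hyF : ∀ᵐ η ∂Q, ∀ t ∈ Set.Icc (0:ℝ) T,
        y t η = x₀ η + (∫ s in (0:ℝ)..t, picF Q b c dis (y s) η) + B t η := by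
      filter_upwards [hyae] with η hη t ht
      rw [hη t ht, hsplit y hym hyc η t]
      ring
    -- crude bound
    set Mb : Ω → ℝ := fun η => 2*T*(Cb + S (dis η)) with hMbdef
    have crude_of : ∀ (u : ℝ → Ω → ℝ) η, (∀ t ∈ Set.Icc (0:ℝ) T,
        u t η = x₀ η + (∫ s in (0:ℝ)..t, picF Q b c dis (u s) η) + B t η) →
        ∀ t ∈ Set.Icc (0:ℝ) T, |u t η - (x₀ η + B t η)| ≤ T * (Cb + S (dis η)) := by
      intro u η hu t ht
      have h1 : u t η - (x₀ η + B t η) = ∫ s in (0:ℝ)..t, picF Q b c dis (u s) η := by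
        rw [hu t ht]; ring
      rw [h1, ← Real.norm_eq_abs]
      have h2 := intervalIntegral.norm_integral_le_of_norm_le_const
        (C := Cb + S (dis η)) (f := fun s => picF Q b c dis (u s) η) (a := 0) (b := t)
        (fun s _ => by rw [Real.norm_eq_abs]; exact hFbd (u s) η)
      refine h2.trans ?_
      have h3 : |t - 0| ≤ T := by
        rw [sub_zero, abs_of_nonneg ht.1]; exact ht.2
      have h4 : 0 ≤ Cb + S (dis η) := by have := hS0 (dis η); linarith
      nlinarith
    have hcrude : ∀ᵐ η ∂Q, ∀ t ∈ Set.Icc (0:ℝ) T, |x t η - y t η| ≤ Mb η := by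
      filter_upwards [hyF] with η hηF t ht
      have h1 := crude_of x η (fun t ht => heq η t ht) t ht
      have h2 := crude_of y η hηF t ht
      have := abs_sub_abs_le_abs_sub (x t η) (y t η)
      calc |x t η - y t η|
          = |(x t η - (x₀ η + B t η)) - (y t η - (x₀ η + B t η))| := by ring_nf
        _ ≤ |x t η - (x₀ η + B t η)| + |y t η - (x₀ η + B t η)| := abs_sub _ _
        _ ≤ Mb η := by simp only [hMbdef]; linarith
    set W : Ω → ℝ := fun η => Mb η + 2*C₀ with hWdef
    have hW0 : ∀ η, 0 ≤ W η := fun η => by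
      have := hS0 (dis η); simp only [hWdef, hMbdef]; nlinarith [hT.le, hC₀0]
    have hW2C₀ : ∀ η, 2*C₀ ≤ W η := fun η => by
      have := hS0 (dis η); simp only [hWdef, hMbdef]; nlinarith [hT.le]
    have hMbint : Integrable Mb Q := (hint1.const_mul (2*T))
    have hWint : Integrable W Q := by
      have : W = fun η => 2*T*(Cb + S (dis η)) + 2*C₀ := rfl
      rw [this]
      exact integral_add_aux2 (hint1.const_mul (2*T)) (2*C₀)
    have hWval : ∫ η, W η ∂Q = 4*C₀ := by
      have e2 : ∫ η, W η ∂Q = (∫ η, 2*T*(Cb + S (dis η)) ∂Q) + ∫ _η : Ω, 2*C₀ ∂Q :=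
        integral_add (hint1.const_mul (2*T)) (integrable_const _)
      rw [e2, integral_const_mul, e1, integral_const]
      simp [hC₀def]
      ring
    have integ_estW : ∀ (f : Ω → ℝ) (r : ℝ), Measurable f →
        (∀ᵐ η ∂Q, |f η| ≤ W η * r) → ∫ η, |f η| ∂Q ≤ 4*C₀*r := by
      intro f r hf hbd
      have hint : Integrable (fun η => |f η|) Q := by
        refine (hWint.mul_const r).mono' hf.abs.aestronglyMeasurable ?_
        filter_upwards [hbd] with η hη
        rw [Real.norm_eq_abs, abs_abs]; exact hη
      calc ∫ η, |f η| ∂Q ≤ ∫ η, W η * r ∂Q :=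
            integral_mono_ae hint (hWint.mul_const r) hbd
        _ = (∫ η, W η ∂Q) * r := integral_mul_const _ _
        _ = 4*C₀*r := by rw [hWval]
    -- main uniqueness induction
    have ukey : ∀ n : ℕ, ∀ᵐ η ∂Q, ∀ t ∈ Set.Icc (0:ℝ) T,
        |x t η - y t η| ≤ W η * ((4*K)^n * t^n / n.factorial) := by
      intro n
      induction n with
      | zero =>
        filter_upwards [hcrude] with η hη t ht
        have := hη t ht
        simp only [pow_zero, Nat.factorial_zero, Nat.cast_one, mul_one, one_mul, div_one]
        have h2 : Mb η ≤ W η := by simp only [hWdef]; linarith [hC₀0]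
        linarith
      | succ n ih =>
        have hEs : ∀ s ∈ Set.Icc (0:ℝ) T,
            ∫ η', |x s η' - y s η'| ∂Q ≤ 4*C₀ * ((4*K)^n * s^n / n.factorial) := by
          intro s hs
          refine integ_estW _ _ ((hx_meas s).sub (hym s)) ?_
          filter_upwards [ih] with η hη using hη s hs
        filter_upwards [hyF, ih, hcrude] with η hηF hηI hηC
        intro t ht
        have ht0 : (0:ℝ) ≤ t := ht.1
        have hcx : Continuous fun s => picF Q b c dis (x s) η := hFcont x hx_meas hx_cont η
        have hcy : Continuous fun s => picF Q b c dis (y s) η := hFcont y hym hyc η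
        have hd : x t η - y t η
            = ∫ s in (0:ℝ)..t, (picF Q b c dis (x s) η - picF Q b c dis (y s) η) := by
          rw [intervalIntegral.integral_sub (hcx.intervalIntegrable 0 t)
            (hcy.intervalIntegrable 0 t), heq η t ht, hηF t ht]
          ring
        rw [hd]
        have hbnd : ∀ s ∈ Set.Icc (0:ℝ) t,
            |picF Q b c dis (x s) η - picF Q b c dis (y s) η|
              ≤ (2*K*W η + 4*K*C₀) * ((4*K)^n * s^n / n.factorial) := by
          intro s hs
          have hsT : s ∈ Set.Icc (0:ℝ) T := ⟨hs.1, hs.2.trans ht.2⟩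
          have hintd : Integrable (fun η' => |x s η' - y s η'|) Q := by
            refine hMbint.mono' (((hx_meas s).sub (hym s)).abs.aestronglyMeasurable) ?_
            filter_upwards [hcrude] with η' hη'
            rw [Real.norm_eq_abs, abs_abs]
            exact hη' s hsT
          have h1 := picF_diff_bound (x s) (y s) (hx_meas s) (hym s) hintd η
          have h2 := hEs s hsT
          have h3 := hηI s hsT
          calc |picF Q b c dis (x s) η - picF Q b c dis (y s) η|
              ≤ 2*K*|x s η - y s η| + K * ∫ η', |x s η' - y s η'| ∂Q := h1
            _ ≤ 2*K*(W η * ((4*K)^n * s^n / n.factorial))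
                + K * (4*C₀ * ((4*K)^n * s^n / n.factorial)) := by
                refine add_le_add (mul_le_mul_of_nonneg_left h3 (by linarith))
                  (mul_le_mul_of_nonneg_left h2 hK0)
            _ = (2*K*W η + 4*K*C₀) * ((4*K)^n * s^n / n.factorial) := by ring
        have hcont_bd : Continuous fun s : ℝ =>
            (2*K*W η + 4*K*C₀) * ((4*K)^n * s^n / n.factorial) := by
          have hre : (fun s : ℝ => (2*K*W η + 4*K*C₀) * ((4*K)^n * s^n / n.factorial))
              = fun s : ℝ => ((2*K*W η + 4*K*C₀) * (4*K)^n / n.factorial) * s^n :=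
            funext fun s => by ring
          rw [hre]
          exact continuous_const.mul (continuous_pow n)
        have h4 : ‖∫ s in (0:ℝ)..t, (picF Q b c dis (x s) η - picF Q b c dis (y s) η)‖
            ≤ ∫ s in (0:ℝ)..t, |picF Q b c dis (x s) η - picF Q b c dis (y s) η| := by
          have := intervalIntegral.norm_integral_le_integral_norm
            (f := fun s => picF Q b c dis (x s) η - picF Q b c dis (y s) η) (μ := volume) ht0
          simpa [Real.norm_eq_abs] using this
        rw [Real.norm_eq_abs] at h4
        refine h4.trans ?_
        have h5 : (∫ s in (0:ℝ)..t, |picF Q b c dis (x s) η - picF Q b c dis (y s) η|)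
            ≤ ∫ s in (0:ℝ)..t, (2*K*W η + 4*K*C₀) * ((4*K)^n * s^n / n.factorial) :=
          intervalIntegral.integral_mono_on ht0 ((hcx.sub hcy).abs.intervalIntegrable 0 t)
            (hcont_bd.intervalIntegrable 0 t) hbnd
        refine h5.trans ?_
        rw [calc_step]
        refine step_le _ _ _ _ ht0 ?_
        have := hW2C₀ η
        nlinarith [hW0 η]
    have hall : ∀ᵐ η ∂Q, ∀ n : ℕ, ∀ t ∈ Set.Icc (0:ℝ) T,
        |x t η - y t η| ≤ W η * ((4*K)^n * t^n / n.factorial) := ae_all_iff.2 ukey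
    filter_upwards [hall] with η hη t ht
    have h0 : Tendsto (fun n : ℕ => W η * ((4*K)^n * t^n / n.factorial)) atTop (𝓝 0) := by
      have hs := (Real.summable_pow_div_factorial (4*K*t)).tendsto_atTop_zero
      have hre : (fun n : ℕ => W η * ((4*K)^n * t^n / n.factorial))
          = fun n : ℕ => W η * ((4*K*t)^n / n.factorial) := funext fun n => by ring
      rw [hre]
      simpa using hs.const_mul (W η)
    have hle : |x t η - y t η| ≤ 0 :=
      ge_of_tendsto h0 (Eventually.of_forall fun n => hη n t ht)
    have : x t η - y t η = 0 := abs_eq_zero.1 (le_antisymm hle (abs_nonneg _))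
    linarith
  refine ⟨x, ⟨hx_meas, hx_cont, ?_⟩, ?_⟩
  · refine ae_of_all _ fun η t ht => ?_
    rw [heq η t ht, hsplit x hx_meas hx_cont η t]
    ring
  · intro y hy
    obtain ⟨hym, hyc, hyae⟩ := hy
    exact uniq y hym hyc hyae
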